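/- Fix an integer n ≥ 2 and let H be the 6n × (4n²−2n) block–point incidence matrix of the construction. Define the Tanner graph of H as the simple bipartite graph whose vertex set is the disjoint union of the row index set V = {0,…,6n−1} and the column index set ({0,…,2n−1}\{n}) × {0,…,2n−1}, with an edge between row i and column (j,a) if and only if i ∈ B_{j,a}. Then this graph contains no cycle of length less than 6; that is, its girth is at least 6. -/

import Mathlib

def xfun (n j : ℕ) : ℕ := if j < n then 2 * j + 1 else 2 * (j - n)

def Blk (n j a : ℕ) : Finset ℕ :=
  {a, (j + a) % (2 * n) + 2 * n, (xfun n j + a) % (2 * n) + 4 * n}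

abbrev ColIdx (n : ℕ) := {p : Fin (2 * n) × Fin (2 * n) // (p.1 : ℕ) ≠ n}

/-- The Tanner graph of the parity-check matrix H: a simple bipartite graph on the
disjoint union of the row indices V = {0,…,6n-1} and the column indices (j,a),
with an edge between row i and column (j,a) iff i ∈ B_{j,a}. -/
def Tanner (n : ℕ) : SimpleGraph (Fin (6 * n) ⊕ ColIdx n) where
  Adj u v :=
    match u, v with
    | Sum.inl i, Sum.inr p => (i : ℕ) ∈ Blk n (p.1.1 : ℕ) (p.1.2 : ℕ)
    | Sum.inr p, Sum.inl i => (i : ℕ) ∈ Blk n (p.1.1 : ℕ) (p.1.2 : ℕ)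
    | _, _ => False
  symm := by
    constructor
    intro u v h
    cases u <;> cases v <;> simp_all
  loopless := by
    constructor
    intro u h
    cases u <;> simp_all

lemma modeq_eq {m a b : ℕ} (h : a ≡ b [MOD m]) (ha : a < m) (hb : b < m) : a = b := by
  unfold Nat.ModEq at h
  rwa [Nat.mod_eq_of_lt ha, Nat.mod_eq_of_lt hb] at h

lemma xlt {n j : ℕ} (hn : 1 ≤ n) (hj : j < 2 * n) : xfun n j < 2 * n := by
  unfold xfun; split <;> omega

/-- Key lemma: two distinct blocks cannot share two distinct points. -/
lemma key (n : ℕ) (hn : 2 ≤ n) {j a j' a' i i' : ℕ}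
    (hj : j < 2 * n) (hj' : j' < 2 * n) (ha : a < 2 * n) (ha' : a' < 2 * n)
    (hjn : j ≠ n) (hj'n : j' ≠ n)
    (hpq : ¬(j = j' ∧ a = a')) (hii : i ≠ i')
    (m1 : i ∈ Blk n j a) (m2 : i ∈ Blk n j' a')
    (m3 : i' ∈ Blk n j a) (m4 : i' ∈ Blk n j' a') : False := by
  have hm : 0 < 2 * n := by omega
  have b1 : (j + a) % (2 * n) < 2 * n := Nat.mod_lt _ hm
  have b2 : (j' + a') % (2 * n) < 2 * n := Nat.mod_lt _ hm
  have b3 : (xfun n j + a) % (2 * n) < 2 * n := Nat.mod_lt _ hm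
  have b4 : (xfun n j' + a') % (2 * n) < 2 * n := Nat.mod_lt _ hm
  -- Three "collision" scenarios
  have lemA : a = a' → (j + a) % (2 * n) = (j' + a') % (2 * n) → False := by
    intro hA hu
    subst hA
    have h1 : j ≡ j' [MOD 2 * n] := Nat.ModEq.add_right_cancel' a hu
    have := modeq_eq h1 hj hj'
    exact hpq ⟨this, rfl⟩
  have lemB : a = a' → (xfun n j + a) % (2 * n) = (xfun n j' + a') % (2 * n) → False := by
    intro hA hw
    subst hA
    have h1 : xfun n j ≡ xfun n j' [MOD 2 * n] := Nat.ModEq.add_right_cancel' a hw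
    have h2 := modeq_eq h1 (xlt (by omega) hj) (xlt (by omega) hj')
    unfold xfun at h2
    split_ifs at h2 <;> exact hpq ⟨by omega, rfl⟩
  have lemC : (j + a) % (2 * n) = (j' + a') % (2 * n) →
      (xfun n j + a) % (2 * n) = (xfun n j' + a') % (2 * n) → False := by
    intro hu hw
    have h1 : j + a ≡ j' + a' [MOD 2 * n] := hu
    have h2 : xfun n j + a ≡ xfun n j' + a' [MOD 2 * n] := hw
    have h3 : j + a + (xfun n j' + a') ≡ j' + a' + (xfun n j + a) [MOD 2 * n] :=
      Nat.ModEq.add h1 h2.symm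
    rw [show j + a + (xfun n j' + a') = (j + xfun n j') + (a + a') from by ring,
        show j' + a' + (xfun n j + a) = (j' + xfun n j) + (a + a') from by ring] at h3
    have hc : j + xfun n j' ≡ j' + xfun n j [MOD 2 * n] :=
      Nat.ModEq.add_right_cancel' _ h3
    have hjj : j = j' := by
      unfold xfun at hc
      split_ifs at hc <;>
        first
        | · rw [show j + (2 * j' + 1) = j' + (j + j' + 1) from by ring,
                show j' + (2 * j + 1) = j + (j + j' + 1) from by ring] at hc
            exact (modeq_eq (Nat.ModEq.add_right_cancel' _ hc) hj' hj).symm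
        | · have hc2 := hc.add_right (2 * n)
            rw [show j + 2 * (j' - n) + 2 * n = j' + (j + j') from by omega,
                show j' + (2 * j + 1) + 2 * n = (j + 1 + 2 * n) + (j + j') from by ring] at hc2
            have hc3 : j' ≡ j + 1 + 2 * n [MOD 2 * n] := Nat.ModEq.add_right_cancel' _ hc2
            have hc4 : j + 1 + 2 * n ≡ j + 1 [MOD 2 * n] := Nat.add_mod_right _ _
            have := modeq_eq (hc3.trans hc4) hj' (by omega)
            omega
        | · have hc2 := hc.add_right (2 * n)
            rw [show j + (2 * j' + 1) + 2 * n = (j' + 1 + 2 * n) + (j + j') from by ring,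
                show j' + 2 * (j - n) + 2 * n = j + (j + j') from by omega] at hc2
            have hc3 : j' + 1 + 2 * n ≡ j [MOD 2 * n] := Nat.ModEq.add_right_cancel' _ hc2
            have hc4 : j' + 1 + 2 * n ≡ j' + 1 [MOD 2 * n] := Nat.add_mod_right _ _
            have := modeq_eq (hc4.symm.trans hc3) (by omega) hj
            omega
        | · have hc2 := hc.add_right (2 * n)
            rw [show j + 2 * (j' - n) + 2 * n = j' + (j + j') from by omega,
                show j' + 2 * (j - n) + 2 * n = j + (j + j') from by omega] at hc2
            exact (modeq_eq (Nat.ModEq.add_right_cancel' _ hc2) hj' hj).symm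
    subst hjj
    have ha2 : a ≡ a' [MOD 2 * n] := Nat.ModEq.add_left_cancel' j h1
    exact hpq ⟨rfl, modeq_eq ha2 ha ha'⟩
  simp only [Blk, Finset.mem_insert, Finset.mem_singleton] at m1 m2 m3 m4
  rcases m1 with h1 | h1 | h1 <;> rcases m2 with h2 | h2 | h2 <;>
    rcases m3 with h3 | h3 | h3 <;> rcases m4 with h4 | h4 | h4 <;>
    first
      | omega
      | exact lemA (by omega) (by omega)
      | exact lemB (by omega) (by omega)
      | exact lemC (by omega) (by omega)

lemma colne {n : ℕ} {p q : ColIdx n} (h : p ≠ q) :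
    ¬(((p.1.1 : ℕ) = (q.1.1 : ℕ)) ∧ ((p.1.2 : ℕ) = (q.1.2 : ℕ))) := by
  rintro ⟨h1, h2⟩
  exact h (Subtype.ext (Prod.ext (Fin.val_injective h1) (Fin.val_injective h2)))

/-- The Tanner graph contains no cycle of length less than 6: its girth is at least 6. -/
theorem stmt7 (n : ℕ) (hn : 2 ≤ n) :
    ∀ (v : Fin (6 * n) ⊕ ColIdx n) (w : (Tanner n).Walk v v),
      w.IsCycle → 6 ≤ w.length := by
  intro v w hc
  by_contra hlen
  push_neg at hlen
  have h3 := hc.three_le_length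
  cases w with
  | nil => simp at h3
  | cons h1 w1 =>
    cases w1 with
    | nil => simp at h3
    | cons h2 w2 =>
      cases w2 with
      | nil => simp at h3
      | cons h3' w3 =>
        cases w3 with
        | nil =>
          -- length 3 : odd cycle, impossible by bipartiteness
          rename_i b c
          clear hc hlen h3
          cases v <;> cases b <;> cases c <;>
            first | exact h1 | exact h2 | exact h3'
        | cons h4 w4 =>
          cases w4 with
          | nil =>
            -- length 4
            rename_i b c d
            have hnd := hc.support_nodup
            simp [SimpleGraph.Walk.support_cons] at hnd
            clear hc hlen h3
            cases v with
            | inl i =>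
              cases b with
              | inl i' => exact h1
              | inr p =>
                cases c with
                | inr q => exact h2
                | inl i2 =>
                  cases d with
                  | inl i3 => exact h3'
                  | inr q =>
                    -- edges: i∈Blk p, i2∈Blk p, i2∈Blk q, i∈Blk q
                    have e1 : (i : ℕ) ∈ Blk n (p.1.1 : ℕ) (p.1.2 : ℕ) := h1
                    have e2 : (i2 : ℕ) ∈ Blk n (p.1.1 : ℕ) (p.1.2 : ℕ) := h2
                    have e3 : (i2 : ℕ) ∈ Blk n (q.1.1 : ℕ) (q.1.2 : ℕ) := h3'
                    have e4 : (i : ℕ) ∈ Blk n (q.1.1 : ℕ) (q.1.2 : ℕ) := h4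
                    have hii : (i : ℕ) ≠ (i2 : ℕ) := by
                      intro h; exact hnd.2.1.2 (congrArg Sum.inl (Fin.ext h.symm))
                    have hpq : p ≠ q := by
                      intro h; exact hnd.1.2.1 (congrArg Sum.inr h)
                    exact key n hn p.1.1.isLt q.1.1.isLt p.1.2.isLt q.1.2.isLt
                      p.2 q.2 (colne hpq) hii e1 e4 e2 e3
            | inr p =>
              cases b with
              | inr q => exact h1
              | inl i =>
                cases c with
                | inl i2 => exact h2
                | inr q =>
                  cases d with
                  | inr r => exact h3'
                  | inl i2 =>
                    have e1 : (i : ℕ) ∈ Blk n (p.1.1 : ℕ) (p.1.2 : ℕ) := h1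
                    have e2 : (i : ℕ) ∈ Blk n (q.1.1 : ℕ) (q.1.2 : ℕ) := h2
                    have e3 : (i2 : ℕ) ∈ Blk n (q.1.1 : ℕ) (q.1.2 : ℕ) := h3'
                    have e4 : (i2 : ℕ) ∈ Blk n (p.1.1 : ℕ) (p.1.2 : ℕ) := h4
                    have hii : (i : ℕ) ≠ (i2 : ℕ) := by
                      intro h; exact hnd.1.2.1 (congrArg Sum.inl (Fin.ext h))
                    have hpq : p ≠ q := by
                      intro h; exact hnd.2.1.2 (congrArg Sum.inr h.symm)
                    exact key n hn p.1.1.isLt q.1.1.isLt p.1.2.isLt q.1.2.isLt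
                      p.2 q.2 (colne hpq) hii e1 e2 e4 e3
          | cons h5 w5 =>
            cases w5 with
            | nil =>
              -- length 5 : odd cycle
              rename_i b c d e
              clear hc hlen h3
              cases v <;> cases b <;> cases c <;> cases d <;> cases e <;>
                first | exact h1 | exact h2 | exact h3' | exact h4 | exact h5
            | cons h6 w6 =>
              simp only [SimpleGraph.Walk.length_cons] at hlen
              omega
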